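/- Let c > 0. The function t ↦ c · arccos(t) · √((1+t)/(1-t)) is strictly increasing on (-1,1), and its limit as t → 1⁻ equals 2c. -/

import Mathlib

open Real Filter Set

lemma sqrt_ratio (x : ℝ) (h1 : -1 < x) (h2 : x < 1) :
    Real.sqrt ((1+x)/(1-x)) = (1+x) / Real.sqrt (1 - x^2) := by
  have ha : (0:ℝ) < 1 + x := by linarith
  have hb : (0:ℝ) < 1 - x := by linarith
  rw [Real.sqrt_div ha.le, show (1 - x^2) = (1+x)*(1-x) by ring,
    Real.sqrt_mul ha.le]
  rw [div_eq_div_iff (Real.sqrt_pos.2 hb).ne' (by positivity)]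
  rw [show Real.sqrt (1+x) * (Real.sqrt (1+x) * Real.sqrt (1-x))
      = Real.sqrt (1+x) * Real.sqrt (1+x) * Real.sqrt (1-x) by ring,
    Real.mul_self_sqrt ha.le]

lemma hasDerivAt_f (c x : ℝ) (h1 : -1 < x) (h2 : x < 1) :
    HasDerivAt (fun t : ℝ => c * Real.arccos t * Real.sqrt ((1+t)/(1-t)))
      (c * (Real.arccos x - Real.sqrt (1 - x^2)) / ((1-x) * Real.sqrt (1 - x^2))) x := by
  have ha : (0:ℝ) < 1 + x := by linarith
  have hb : (0:ℝ) < 1 - x := by linarith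
  have hs : (0:ℝ) < Real.sqrt (1 - x^2) := Real.sqrt_pos.2 (by nlinarith)
  have hs2 : Real.sqrt (1 - x^2) ^ 2 = 1 - x^2 := Real.sq_sqrt (by nlinarith)
  have hA := Real.hasDerivAt_arccos (by linarith : x ≠ -1) (by linarith : x ≠ 1)
  have hnum : HasDerivAt (fun t : ℝ => 1 + t) 1 x := by
    simpa using (hasDerivAt_id x).const_add 1
  have hden : HasDerivAt (fun t : ℝ => 1 - t) (-1) x := by
    exact (hasDerivAt_id x).const_sub 1
  have hg : HasDerivAt (fun t : ℝ => (1+t)/(1-t)) (2/(1-x)^2) x := by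
    have := hnum.div hden hb.ne'
    refine this.congr_deriv ?_
    field_simp
    ring
  have hq := hg.sqrt (by positivity : (1+x)/(1-x) ≠ 0)
  have hf := (hA.const_mul c).mul hq
  refine hf.congr_deriv ?_
  symm
  rw [sqrt_ratio x h1 h2]
  have hss : Real.sqrt (1-x^2) * Real.sqrt (1-x^2) = 1 - x^2 :=
    Real.mul_self_sqrt (by nlinarith)
  field_simp
  linear_combination (-(c*Real.arccos x*Real.sqrt (1-x^2)) - c*(1-x^2)) * hss

theorem strictMono_arccos_mul_sqrt (c : ℝ) (hc : 0 < c) :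
    StrictMonoOn (fun t : ℝ => c * Real.arccos t * Real.sqrt ((1 + t) / (1 - t)))
      (Set.Ioo (-1 : ℝ) 1) ∧
    Filter.Tendsto (fun t : ℝ => c * Real.arccos t * Real.sqrt ((1 + t) / (1 - t)))
      (nhdsWithin 1 (Set.Iio 1)) (nhds (2 * c)) := by
  constructor
  · apply strictMonoOn_of_deriv_pos (convex_Ioo _ _)
    · exact fun x hx =>
        (hasDerivAt_f c x hx.1 hx.2).differentiableAt.continuousAt.continuousWithinAt
    · intro x hx
      rw [interior_Ioo] at hx
      obtain ⟨h1, h2⟩ := hx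
      rw [(hasDerivAt_f c x h1 h2).deriv]
      have hb : (0:ℝ) < 1 - x := by linarith
      have hs : (0:ℝ) < Real.sqrt (1 - x^2) := Real.sqrt_pos.2 (by nlinarith)
      have hAs : Real.sqrt (1 - x^2) < Real.arccos x := by
        have h0 : 0 < Real.arccos x := Real.arccos_pos.2 h2
        have := Real.sin_lt h0
        rwa [Real.sin_arccos] at this
      exact div_pos (mul_pos hc (sub_pos.2 hAs)) (mul_pos hb hs)
  · -- limit part
    have hsin : Filter.Tendsto (fun θ : ℝ => θ / Real.sin θ) (nhdsWithin 0 {0}ᶜ) (nhds 1) := by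
      have h : HasDerivAt Real.sin 1 0 := by simpa using Real.hasDerivAt_sin 0
      have h2 := hasDerivAt_iff_tendsto_slope.mp h
      have h3 : Filter.Tendsto (fun θ : ℝ => Real.sin θ / θ) (nhdsWithin 0 {0}ᶜ) (nhds 1) := by
        refine h2.congr' ?_
        filter_upwards [self_mem_nhdsWithin] with θ hθ
        simp [slope_def_field, Real.sin_zero]
      have h4 := h3.inv₀ one_ne_zero
      simpa using h4
    have harccos : Filter.Tendsto Real.arccos (nhdsWithin 1 (Set.Iio 1)) (nhdsWithin 0 {0}ᶜ) := by
      apply tendsto_nhdsWithin_of_tendsto_nhds_of_eventually_within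
      · have h := (Real.continuous_arccos.tendsto 1).mono_left
          (nhdsWithin_le_nhds (s := Set.Iio 1))
        simpa using h
      · filter_upwards [self_mem_nhdsWithin] with t ht
        exact (Real.arccos_pos.2 ht).ne'
    have hcomp : Filter.Tendsto (fun t => Real.arccos t / Real.sin (Real.arccos t))
        (nhdsWithin 1 (Set.Iio 1)) (nhds 1) := hsin.comp harccos
    have hlin : Filter.Tendsto (fun t : ℝ => 1 + t) (nhdsWithin 1 (Set.Iio 1)) (nhds 2) := by
      have h : Filter.Tendsto (fun t : ℝ => 1 + t) (nhds 1) (nhds 2) := by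
        exact ((continuous_const.add continuous_id :
          Continuous fun t : ℝ => 1 + t).tendsto' 1 2 (by norm_num))
      exact h.mono_left nhdsWithin_le_nhds
    have hmain := (tendsto_const_nhds (x := c)).mul hcomp |>.mul hlin
    rw [show c * 1 * 2 = 2 * c by ring] at hmain
    refine hmain.congr' ?_
    filter_upwards [Ioo_mem_nhdsLT_of_mem (show (1:ℝ) ∈ Set.Ioc (-1:ℝ) 1 by norm_num)]
      with t ht
    obtain ⟨h1, h2⟩ := ht
    have hs : (0:ℝ) < Real.sqrt (1 - t^2) := Real.sqrt_pos.2 (by nlinarith)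
    rw [Real.sin_arccos, sqrt_ratio t h1 h2]
    field_simp
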